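/- For every integer u ≥ 2 and all integers n ≥ 2u, the identity Σ_{i=0}^{⌊(n−1)/u⌋} C(⌊(n+(u−1)i−u)/(2u−1)⌋, i) = Σ_{i=0}^{⌊(n−1)/u⌋−1} C(⌊(n+(u−1)i−2u)/(2u−1)⌋, i) + Σ_{i=0}^{⌊n/u⌋−2} C(⌊(n+(u−1)i−u)/(2u−1)⌋ − 1, i) holds. -/

import Mathlib

theorem binomial_recurrence_identity (u n : ℕ) (hu : 2 ≤ u) (hn : 2 * u ≤ n) :
    ∑ i ∈ Finset.range ((n - 1) / u + 1),
        ((n + (u - 1) * i - u) / (2 * u - 1)).choose i =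
      (∑ i ∈ Finset.range ((n - 1) / u),
        ((n + (u - 1) * i - 2 * u) / (2 * u - 1)).choose i) +
      ∑ i ∈ Finset.range (n / u - 1),
        ((n + (u - 1) * i - u) / (2 * u - 1) - 1).choose i := by
  have hu0 : 0 < u := by omega
  have hm : 0 < 2 * u - 1 := by omega
  set F : ℕ → ℕ := fun i => (n + (u - 1) * i - u) / (2 * u - 1) with hF
  have hFd : ∀ i, (n + (u - 1) * i - u) / (2 * u - 1) = F i := fun i => rfl
  -- first RHS summand rewrite
  have hg : ∀ i, (n + (u - 1) * i - 2 * u) / (2 * u - 1) = F (i + 1) - 1 := by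
    intro i
    have e : (u - 1) * (i + 1) = (u - 1) * i + (u - 1) := by ring
    have h1 : n + (u - 1) * (i + 1) - u = (n + (u - 1) * i - 2 * u) + (2 * u - 1) := by omega
    show _ = (n + (u - 1) * (i + 1) - u) / (2 * u - 1) - 1
    rw [h1, Nat.add_div_right _ hm, Nat.add_sub_cancel]
  have hF1 : ∀ i, 1 ≤ F (i + 1) := by
    intro i
    have e : (u - 1) * (i + 1) = (u - 1) * i + (u - 1) := by ring
    have h1 : 2 * u - 1 ≤ n + (u - 1) * (i + 1) - u := by omega
    exact (Nat.one_le_div_iff hm).mpr h1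
  have hpascal : ∀ i, (F (i + 1)).choose (i + 1)
      = (F (i + 1) - 1).choose i + (F (i + 1) - 1).choose (i + 1) := by
    intro i
    obtain ⟨m, hm'⟩ := Nat.exists_eq_add_of_le (hF1 i)
    rw [hm', Nat.add_comm 1 m, Nat.add_sub_cancel, Nat.choose_succ_succ]
  have hvanish : ∀ i, n / u - 1 ≤ i → (F i - 1).choose i = 0 := by
    intro i hi
    apply Nat.choose_eq_zero_of_lt
    have hL : 2 ≤ n / u := (Nat.le_div_iff_mul_le hu0).mpr (by omega)
    obtain ⟨d, hd⟩ : ∃ d, n / u = d + 1 := ⟨n / u - 1, by omega⟩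
    have h1 : u * d ≤ u * i := Nat.mul_le_mul_left u (by omega)
    have h2 : u * (d + 1) + n % u = n := hd ▸ Nat.div_add_mod n u
    have e1 : u * (d + 1) = u * d + u := by ring
    have h3 : n % u < u := Nat.mod_lt n hu0
    have e2 : u * i = (u - 1) * i + i := by
      have : (u - 1) * i = u * i - 1 * i := Nat.sub_mul u 1 i
      have hle : 1 * i ≤ u * i := Nat.mul_le_mul_right i (by omega)
      omega
    have hFi : F i < i + 1 := by
      rw [hF]
      apply Nat.div_lt_iff_lt_mul hm |>.mpr
      have e3 : (i + 1) * (2 * u - 1) = (i + 1) * (2 * u) - (i + 1) * 1 := Nat.mul_sub (i+1) (2*u) 1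
      have e4 : (i + 1) * (2 * u) = 2 * (u * i) + 2 * u := by ring
      omega
    have hi1 : 1 ≤ i := by omega
    omega
  have hLK : n / u ≤ (n - 1) / u + 1 := by
    have h : n ≤ (n - 1) + u := by omega
    calc n / u ≤ ((n - 1) + u) / u := Nat.div_le_div_right h
      _ = (n - 1) / u + 1 := Nat.add_div_right _ hu0
  -- rewrite goal in terms of F
  simp only [hFd, hg]
  rw [Finset.sum_range_succ']
  have step1 : ∑ i ∈ Finset.range ((n - 1) / u), (F (i + 1)).choose (i + 1)
      = (∑ i ∈ Finset.range ((n - 1) / u), (F (i + 1) - 1).choose i)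
        + ∑ i ∈ Finset.range ((n - 1) / u), (F (i + 1) - 1).choose (i + 1) := by
    rw [← Finset.sum_add_distrib]
    exact Finset.sum_congr rfl fun i _ => hpascal i
  have step2 : (∑ i ∈ Finset.range (n / u - 1), (F i - 1).choose i)
      = ∑ i ∈ Finset.range ((n - 1) / u + 1), (F i - 1).choose i := by
    apply Finset.sum_subset
    · exact Finset.range_subset_range.mpr ((Nat.sub_le _ _).trans hLK)
    · intro i _ hi
      exact hvanish i (by simpa using hi)
  have step3 : ∑ i ∈ Finset.range ((n - 1) / u + 1), (F i - 1).choose i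
      = (∑ i ∈ Finset.range ((n - 1) / u), (F (i + 1) - 1).choose (i + 1)) + (F 0 - 1).choose 0 := by
    rw [Finset.sum_range_succ']
  rw [step1, step2, step3]
  simp only [Nat.choose_zero_right]
  omega
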